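/- arXiv:2311.08575 — 3 statements merged into one kernel-verified Lean document; each statement's English description precedes it below -/
import Mathlib

section
/- Let K ⊆ ℝⁿ be a closed convex set with Gaussian measure γₙ(K) ≥ 0.9. Then K contains the closed unit Euclidean ball B(1) centered at the origin. -/
open MeasureTheory ProbabilityTheory Real
open scoped ENNReal RealInnerProductSpace

/-- The standard Gaussian measure `N(0, Iₙ)` on `ℝⁿ`, defined via its density
`(2π)^{-n/2} e^{-‖x‖²/2}` with respect to Lebesgue measure. -/
noncomputable def stdGaussian (n : ℕ) : Measure (EuclideanSpace ℝ (Fin n)) :=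
  volume.withDensity fun x => ENNReal.ofReal ((2 * π) ^ (-(n : ℝ) / 2) * Real.exp (-‖x‖ ^ 2 / 2))

lemma aux_lintegral_prod_gaussianPDF : ∀ (m : ℕ),
    ∫⁻ x : Fin m → ℝ, ∏ i, gaussianPDF 0 1 (x i) = 1
  | 0 => by
    simp [volume_pi, Measure.pi_of_empty]
  | (m + 1) => by
    have h := (MeasureTheory.volume_preserving_piFinSuccAbove (fun _ : Fin (m+1) => ℝ) 0).symm
    rw [← h.lintegral_comp_emb (MeasurableEquiv.measurableEmbedding _)]
    simp_rw [MeasurableEquiv.piFinSuccAbove_symm_apply, Fin.insertNthEquiv, Equiv.coe_fn_mk,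
      Fin.insertNth_zero, Fin.prod_univ_succ, Fin.cons_zero, Fin.cons_succ, cast_eq]
    rw [MeasureTheory.Measure.volume_eq_prod, lintegral_prod_mul (f := gaussianPDF 0 1)
      (g := fun y : Fin m → ℝ => ∏ i, gaussianPDF 0 1 (y i))
      (measurable_gaussianPDF 0 1).aemeasurable
      (Finset.measurable_prod Finset.univ (fun i _ => (measurable_gaussianPDF 0 1).comp (measurable_pi_apply i))).aemeasurable]
    rw [aux_lintegral_prod_gaussianPDF m, lintegral_gaussianPDF_eq_one 0 one_ne_zero, one_mul]

lemma aux_setLIntegral_prod_gaussianPDF (m : ℕ) {A : Set ℝ} (hA : MeasurableSet A) :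
    ∫⁻ x : Fin (m+1) → ℝ in {x | x 0 ∈ A}, ∏ i, gaussianPDF 0 1 (x i)
      = gaussianReal 0 1 A := by
  have h := (MeasureTheory.volume_preserving_piFinSuccAbove (fun _ : Fin (m+1) => ℝ) 0).symm
  have hpre : (⇑(MeasurableEquiv.piFinSuccAbove (fun _ : Fin (m+1) => ℝ) 0).symm) ⁻¹'
      {x : Fin (m+1) → ℝ | x 0 ∈ A} = Prod.fst ⁻¹' A := by
    ext p
    simp [MeasurableEquiv.piFinSuccAbove_symm_apply, Fin.insertNthEquiv, Fin.insertNth_zero]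
  have hAS : MeasurableSet {x : Fin (m+1) → ℝ | x 0 ∈ A} := (measurable_pi_apply 0) hA
  rw [← h.setLIntegral_comp_preimage_emb (MeasurableEquiv.measurableEmbedding _) _ ({x : (Fin (m+1) → ℝ) | x 0 ∈ A}), hpre]
  simp_rw [MeasurableEquiv.piFinSuccAbove_symm_apply, Fin.insertNthEquiv, Equiv.coe_fn_mk,
    Fin.insertNth_zero, Fin.prod_univ_succ, Fin.cons_zero, Fin.cons_succ, cast_eq]
  rw [MeasureTheory.Measure.volume_eq_prod]
  have : (volume.prod volume).restrict (Prod.fst ⁻¹' A)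
      = (volume.restrict A).prod (volume : Measure (Fin m → ℝ)) := by
    rw [← Set.prod_univ, ← Measure.prod_restrict, Measure.restrict_univ]
  rw [this, lintegral_prod_mul (f := gaussianPDF 0 1)
      (g := fun y : Fin m → ℝ => ∏ i, gaussianPDF 0 1 (y i))
      (measurable_gaussianPDF 0 1).aemeasurable
      (Finset.measurable_prod Finset.univ (fun i _ => (measurable_gaussianPDF 0 1).comp (measurable_pi_apply i))).aemeasurable]
  rw [aux_lintegral_prod_gaussianPDF m, mul_one, gaussianReal_apply 0 one_ne_zero A]


lemma aux_density_eq (n : ℕ) (x : EuclideanSpace ℝ (Fin n)) :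
    ENNReal.ofReal ((2 * π) ^ (-(n : ℝ) / 2) * Real.exp (-‖x‖ ^ 2 / 2))
      = ∏ i, gaussianPDF 0 1 (x i) := by
  have h2π : (0:ℝ) < 2 * π := by positivity
  rw [gaussianPDF_def]
  rw [← ENNReal.ofReal_prod_of_nonneg (fun i _ => gaussianPDFReal_nonneg 0 1 (x i))]
  congr 1
  simp only [gaussianPDFReal, NNReal.coe_one, mul_one, sub_zero]
  rw [Finset.prod_mul_distrib, Finset.prod_const, ← Real.exp_sum]
  have hnorm : ‖x‖ ^ 2 = ∑ i, (x i) ^ 2 := by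
    rw [EuclideanSpace.norm_eq, Real.sq_sqrt (by positivity)]
    simp [Real.norm_eq_abs, sq_abs]
  have hsum : ∑ i, -(x i) ^ 2 / 2 = -‖x‖ ^ 2 / 2 := by
    simp [hnorm, neg_div, Finset.sum_div]
  have hconst : (2 * π) ^ (-(n : ℝ) / 2) = ((√(2 * π))⁻¹) ^ (n : ℕ) := by
    rw [Real.sqrt_eq_rpow, ← Real.rpow_neg h2π.le, ← Real.rpow_natCast ((2*π) ^ (-((1:ℝ)/2))) n,
      ← Real.rpow_mul h2π.le]
    congr 1
    push_cast
    ring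
  rw [hconst, hsum]
  simp [Finset.card_fin]

lemma aux_stdGaussian_density :
    ∀ n : ℕ, stdGaussian n
      = volume.withDensity fun y : EuclideanSpace ℝ (Fin n) => ∏ i, gaussianPDF 0 1 (y i) :=
  fun n => by rw [_root_.stdGaussian]; congr 1; funext x; exact aux_density_eq n x

lemma aux_stdGaussian_eval (m : ℕ) {A : Set ℝ} (hA : MeasurableSet A) :
    stdGaussian (m+1) {y | y 0 ∈ A} = gaussianReal 0 1 A := by
  have hS : MeasurableSet {y : EuclideanSpace ℝ (Fin (m+1)) | y 0 ∈ A} := by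
    exact (EuclideanSpace.proj (0 : Fin (m+1)) : EuclideanSpace ℝ (Fin (m+1)) →L[ℝ] ℝ).continuous.measurable hA
  rw [aux_stdGaussian_density (m+1), withDensity_apply _ hS]
  have h := (EuclideanSpace.volume_preserving_symm_measurableEquiv_toLp (Fin (m+1))).symm
  rw [← h.setLIntegral_comp_preimage_emb (MeasurableEquiv.measurableEmbedding _)
      (fun y : EuclideanSpace ℝ (Fin (m+1)) => ∏ i, gaussianPDF 0 1 (y i))
      {y : EuclideanSpace ℝ (Fin (m+1)) | y 0 ∈ A}]
  have hpre : (⇑(MeasurableEquiv.toLp 2 (Fin (m+1) → ℝ)).symm.symm) ⁻¹'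
      {y : EuclideanSpace ℝ (Fin (m+1)) | y 0 ∈ A} = {x : Fin (m+1) → ℝ | x 0 ∈ A} := rfl
  rw [hpre]
  exact aux_setLIntegral_prod_gaussianPDF m hA

lemma aux_stdGaussian_map (n : ℕ) (r : EuclideanSpace ℝ (Fin n) ≃ₗᵢ[ℝ] EuclideanSpace ℝ (Fin n)) :
    (stdGaussian n).map r = stdGaussian n := by
  have hmp : MeasurePreserving r volume volume := r.measurePreserving
  have hemb : MeasurableEmbedding (⇑r) := r.toHomeomorph.measurableEmbedding
  have hg : Measurable fun x : EuclideanSpace ℝ (Fin n) =>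
      ENNReal.ofReal ((2 * π) ^ (-(n : ℝ) / 2) * Real.exp (-‖x‖ ^ 2 / 2)) := by
    apply Measurable.ennreal_ofReal
    exact (measurable_const.mul ((measurable_norm.pow_const 2).neg.div_const 2).exp)
  ext s hs
  rw [Measure.map_apply r.continuous.measurable hs, _root_.stdGaussian,
    withDensity_apply _ (hs.preimage r.continuous.measurable), withDensity_apply _ hs]
  have : ∀ y, ENNReal.ofReal ((2 * π) ^ (-(n : ℝ) / 2) * Real.exp (-‖y‖ ^ 2 / 2))
      = ENNReal.ofReal ((2 * π) ^ (-(n : ℝ) / 2) * Real.exp (-‖r y‖ ^ 2 / 2)) := by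
    intro y; rw [r.norm_map]
  calc ∫⁻ y in ⇑r ⁻¹' s, ENNReal.ofReal ((2 * π) ^ (-(n : ℝ) / 2) * Real.exp (-‖y‖ ^ 2 / 2)) ∂volume
      = ∫⁻ y in ⇑r ⁻¹' s, ENNReal.ofReal ((2 * π) ^ (-(n : ℝ) / 2) * Real.exp (-‖r y‖ ^ 2 / 2)) ∂volume := by
        exact setLIntegral_congr_fun (hs.preimage r.continuous.measurable)
          (fun y _ => this y)
    _ = ∫⁻ x in s, ENNReal.ofReal ((2 * π) ^ (-(n : ℝ) / 2) * Real.exp (-‖x‖ ^ 2 / 2)) ∂volume :=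
        hmp.setLIntegral_comp_preimage hs hg

lemma aux_half : gaussianReal 0 1 (Set.Ici (0:ℝ)) = 1/2 := by
  set ν := gaussianReal 0 1 with hν
  have hmap : ν.map (fun x : ℝ => -1 * x) = ν := by
    rw [hν, gaussianReal_map_const_mul (-1)]
    norm_num
  have hIic : ν (Set.Iic (0:ℝ)) = ν (Set.Ici (0:ℝ)) := by
    conv_rhs => rw [← hmap]
    rw [Measure.map_apply (show Measurable fun x : ℝ => -1 * x by fun_prop) measurableSet_Ici]
    congr 1
    ext t
    simp
  have hsing : ν {(0:ℝ)} = 0 :=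
    gaussianReal_absolutelyContinuous 0 one_ne_zero (by simp)
  have hIio : ν (Set.Iic (0:ℝ)) = ν (Set.Iio (0:ℝ)) := by
    have h0 : Set.Iic (0:ℝ) = Set.Iio 0 ∪ {0} := by
      ext t; simp [le_iff_lt_or_eq]
    rw [h0, measure_union (Set.disjoint_singleton_right.mpr (by simp)) (measurableSet_singleton 0), hsing,
      add_zero]
  have huniv : ν (Set.Iio (0:ℝ)) + ν (Set.Ici (0:ℝ)) = 1 := by
    rw [← measure_union (by simp [Set.disjoint_left]) measurableSet_Ici]
    rw [Set.Iio_union_Ici]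
    simp [hν]
  rw [← hIio, hIic, ← two_mul] at huniv
  exact (ENNReal.eq_div_iff (by norm_num) (by norm_num)).mpr huniv

lemma aux_icc : gaussianReal 0 1 (Set.Icc (-1:ℝ) 0) ≤ ENNReal.ofReal (√(2*π))⁻¹ := by
  rw [gaussianReal_apply 0 one_ne_zero]
  calc ∫⁻ x in Set.Icc (-1:ℝ) 0, gaussianPDF 0 1 x
      ≤ ∫⁻ _ in Set.Icc (-1:ℝ) 0, ENNReal.ofReal (√(2*π))⁻¹ := by
        refine lintegral_mono fun x => ?_
        rw [gaussianPDF]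
        refine ENNReal.ofReal_le_ofReal ?_
        rw [gaussianPDFReal]
        simp only [NNReal.coe_one, mul_one, sub_zero]
        have h1 : rexp (-x ^ 2 / 2) ≤ 1 := by
          rw [Real.exp_le_one_iff]
          nlinarith [sq_nonneg x]
        exact mul_le_of_le_one_right (inv_nonneg.2 (Real.sqrt_nonneg _)) h1
    _ ≤ ENNReal.ofReal (√(2*π))⁻¹ := by
        rw [setLIntegral_const]
        have : volume (Set.Icc (-1:ℝ) 0) = 1 := by
          rw [Real.volume_Icc]; norm_num
        rw [this, mul_one]


lemma aux_num : gaussianReal 0 1 (Set.Ici (-1:ℝ)) < ENNReal.ofReal 0.9 := by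
  have hsub : Set.Ici (-1:ℝ) ⊆ Set.Icc (-1:ℝ) 0 ∪ Set.Ici (0:ℝ) := by
    intro t ht
    rcases le_or_gt t 0 with h | h
    · exact Or.inl ⟨ht, h⟩
    · exact Or.inr h.le
  have h1 : gaussianReal 0 1 (Set.Ici (-1:ℝ))
      ≤ ENNReal.ofReal (√(2*π))⁻¹ + 1/2 := by
    calc gaussianReal 0 1 (Set.Ici (-1:ℝ))
        ≤ gaussianReal 0 1 (Set.Icc (-1:ℝ) 0 ∪ Set.Ici (0:ℝ)) := measure_mono hsub
      _ ≤ gaussianReal 0 1 (Set.Icc (-1:ℝ) 0) + gaussianReal 0 1 (Set.Ici (0:ℝ)) :=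
          measure_union_le _ _
      _ ≤ ENNReal.ofReal (√(2*π))⁻¹ + 1/2 := by
          rw [aux_half]
          exact add_le_add_left aux_icc _
  refine lt_of_le_of_lt h1 ?_
  have h2 : (1:ℝ≥0∞)/2 = ENNReal.ofReal (1/2) := by
    rw [ENNReal.ofReal_div_of_pos (by norm_num)]
    norm_num
  rw [h2, ← ENNReal.ofReal_add (by positivity) (by norm_num)]
  rw [ENNReal.ofReal_lt_ofReal_iff (by norm_num)]
  have hsqrt : (5:ℝ)/2 < √(2*π) := by
    rw [show (5:ℝ)/2 = √((5/2)^2) from (Real.sqrt_sq (by norm_num)).symm]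
    apply Real.sqrt_lt_sqrt (by norm_num)
    nlinarith [Real.pi_gt_d6]
  have hinv : (√(2*π))⁻¹ < 2/5 := by
    rw [show (2:ℝ)/5 = ((5:ℝ)/2)⁻¹ by norm_num]
    exact inv_strictAnti₀ (by norm_num) hsqrt
  linarith

/-- A closed convex set of Gaussian measure at least `0.9` contains the unit ball. -/
theorem ball_subset_of_large_volume (n : ℕ) (K : Set (EuclideanSpace ℝ (Fin n)))
    (hcl : IsClosed K) (hK : Convex ℝ K)
    (hvol : ENNReal.ofReal 0.9 ≤ stdGaussian n K) :
    Metric.closedBall (0 : EuclideanSpace ℝ (Fin n)) 1 ⊆ K := by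
  intro z hz
  by_contra hzK
  obtain ⟨f, u, hfz, hub⟩ := geometric_hahn_banach_point_closed hK hcl hzK
  have hKne : K.Nonempty := by
    rcases Set.eq_empty_or_nonempty K with h | h
    · rw [h] at hvol
      simp [ENNReal.ofReal_eq_zero] at hvol
      norm_num at hvol
    · exact h
  obtain ⟨b, hb⟩ := hKne
  set v₀ := (InnerProductSpace.toDual ℝ (EuclideanSpace ℝ (Fin n))).symm f with hv₀def
  have hfx : ∀ x, ⟪v₀, x⟫ = f x := fun x => InnerProductSpace.toDual_symm_apply
  have hv₀ : v₀ ≠ 0 := by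
    intro h
    have h1 : f z < u := hfz
    have h2 : u < f b := hub b hb
    rw [← hfx z, h, inner_zero_left] at h1
    rw [← hfx b, h, inner_zero_left] at h2
    linarith
  have hc : 0 < ‖v₀‖ := norm_pos_iff.mpr hv₀
  set v := ‖v₀‖⁻¹ • v₀ with hvdef
  have hv : ‖v‖ = 1 := norm_smul_inv_norm hv₀
  have hzn : ‖z‖ ≤ 1 := mem_closedBall_zero_iff.mp hz
  have hKsub : K ⊆ {y | (-1:ℝ) ≤ ⟪v, y⟫} := by
    intro y hy
    have h2 : u < f y := hub y hy
    have hyi : ⟪v, y⟫ = ‖v₀‖⁻¹ * f y := by rw [hvdef, real_inner_smul_left, hfx]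
    have hzi : ⟪v, z⟫ = ‖v₀‖⁻¹ * f z := by rw [hvdef, real_inner_smul_left, hfx]
    have habs : |⟪v, z⟫| ≤ 1 := by
      calc |⟪v, z⟫| ≤ ‖v‖ * ‖z‖ := abs_real_inner_le_norm v z
        _ ≤ 1 := by rw [hv, one_mul]; exact hzn
    have hlt : ⟪v, z⟫ < ⟪v, y⟫ := by
      rw [hyi, hzi]
      have : f z < f y := lt_trans hfz h2
      exact mul_lt_mul_of_pos_left this (inv_pos.mpr hc)
    have : (-1:ℝ) ≤ ⟪v, z⟫ := neg_le_of_abs_le habs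
    exact le_of_lt (lt_of_le_of_lt this hlt)
  cases n with
  | zero =>
      have hv0 : v = 0 := by ext i; exact i.elim0
      rw [hv0, norm_zero] at hv
      norm_num at hv
  | succ m =>
      set w : EuclideanSpace ℝ (Fin (m+1)) := EuclideanSpace.single 0 1 with hwdef
      have hw : ‖w‖ = 1 := by rw [hwdef, EuclideanSpace.norm_single]; norm_num
      set r := Submodule.reflection (ℝ ∙ (v - w))ᗮ with hrdef
      have hrv : r v = w := Submodule.reflection_sub (hv.trans hw.symm)
      have hinner : ∀ y : EuclideanSpace ℝ (Fin (m+1)), ⟪v, y⟫ = (r y) 0 := by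
        intro y
        rw [← r.inner_map_map v y, hrv, hwdef, EuclideanSpace.inner_single_left]
        simp
      have hset : {y : EuclideanSpace ℝ (Fin (m+1)) | (-1:ℝ) ≤ ⟪v, y⟫}
          = ⇑r ⁻¹' {y : EuclideanSpace ℝ (Fin (m+1)) | y 0 ∈ Set.Ici (-1:ℝ)} := by
        ext y
        simp only [Set.mem_setOf_eq, Set.mem_preimage, Set.mem_Ici, hinner y]
      have hS : MeasurableSet {y : EuclideanSpace ℝ (Fin (m+1)) | y 0 ∈ Set.Ici (-1:ℝ)} :=
        (EuclideanSpace.proj (0 : Fin (m+1)) :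
          EuclideanSpace ℝ (Fin (m+1)) →L[ℝ] ℝ).continuous.measurable measurableSet_Ici
      have hchain : stdGaussian (m+1) K ≤ gaussianReal 0 1 (Set.Ici (-1:ℝ)) := by
        calc stdGaussian (m+1) K
            ≤ stdGaussian (m+1) {y | (-1:ℝ) ≤ ⟪v, y⟫} := measure_mono hKsub
          _ = stdGaussian (m+1) (⇑r ⁻¹' {y | y 0 ∈ Set.Ici (-1:ℝ)}) := by rw [hset]
          _ = ((stdGaussian (m+1)).map r) {y | y 0 ∈ Set.Ici (-1:ℝ)} :=
              (Measure.map_apply r.continuous.measurable hS).symm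
          _ = stdGaussian (m+1) {y | y 0 ∈ Set.Ici (-1:ℝ)} := by
              rw [aux_stdGaussian_map (m+1) r]
          _ = gaussianReal 0 1 (Set.Ici (-1:ℝ)) := aux_stdGaussian_eval m measurableSet_Ici
      exact absurd (le_trans hvol hchain) (not_le.mpr aux_num)
end

section
/- Let K ⊆ ℝⁿ be a convex set containing the origin, identified with its 0/1 indicator. Then the total convex influence TInf[K] := E_{x∼N(0,Iₙ)}[K(x)·(n − ‖x‖²)] satisfies TInf[K] = lim_{δ→0} (γₙ((1+δ)K) − γₙ(K))/δ, where (1+δ)K = {(1+δ)x : x ∈ K}. -/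
open MeasureTheory ProbabilityTheory Real

open Pointwise

section TinfAux

open Filter Set

noncomputable def gc (n : ℕ) : ℝ := (2 * π) ^ (-(n : ℝ) / 2)

lemma gc_pos (n : ℕ) : 0 < gc n := by unfold gc; positivity

lemma int_gauss (n : ℕ) {b : ℝ} (hb : 0 < b) :
    Integrable (fun x : EuclideanSpace ℝ (Fin n) => rexp (-b * ‖x‖ ^ 2)) := by
  have h := (GaussianFourier.integrable_cexp_neg_mul_sq_norm_add
      (V := EuclideanSpace ℝ (Fin n)) (b := (b : ℂ)) (by simpa using hb) 0 0).norm
  refine h.congr (Eventually.of_forall fun x => ?_)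
  simp [Complex.norm_exp]
  norm_num
  left
  push_cast
  simp [← Complex.ofReal_pow]

lemma int_sq_gauss (n : ℕ) {b : ℝ} (hb : 0 < b) :
    Integrable (fun x : EuclideanSpace ℝ (Fin n) => ‖x‖ ^ 2 * rexp (-b * ‖x‖ ^ 2)) := by
  have hg := (int_gauss n (half_pos hb)).const_mul (2 / b)
  refine hg.mono' ?_ (Eventually.of_forall fun x => ?_)
  · exact (((continuous_norm.pow 2)).mul
      ((continuous_const.mul (continuous_norm.pow 2)).rexp)).aestronglyMeasurable
  · set s := ‖x‖ ^ 2 with hs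
    have hs0 : 0 ≤ s := by positivity
    have e1 : rexp (-b * s) = rexp (-(b / 2) * s) * rexp (-(b / 2) * s) := by
      rw [← Real.exp_add]; ring_nf
    have e2 : b / 2 * s ≤ rexp (b / 2 * s) := by
      have := Real.add_one_le_exp (b / 2 * s); linarith
    have e3 : rexp (-(b / 2) * s) * rexp (b / 2 * s) = 1 := by
      rw [← Real.exp_add]; ring_nf; exact Real.exp_zero
    have e4 : 0 < rexp (-(b / 2) * s) := Real.exp_pos _
    have e5 : 0 < rexp (b / 2 * s) := Real.exp_pos _
    rw [Real.norm_eq_abs, abs_of_nonneg (by positivity)]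
    rw [e1, ← mul_assoc]
    have key : s * rexp (-(b / 2) * s) ≤ 2 / b := by
      rw [le_div_iff₀ hb]
      nlinarith [mul_le_mul_of_nonneg_right e2 e4.le]
    calc s * rexp (-(b/2) * s) * rexp (-(b/2)*s) ≤ (2/b) * rexp (-(b/2)*s) :=
          mul_le_mul_of_nonneg_right key e4.le
      _ = 2 / b * rexp (-(b/2) * s) := rfl

lemma gauss_toReal {n : ℕ} (A : Set (EuclideanSpace ℝ (Fin n))) (hA : MeasurableSet A) :
    (stdGaussian n A).toReal = ∫ x in A, gc n * rexp (-‖x‖ ^ 2 / 2) := by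
  rw [_root_.stdGaussian, withDensity_apply _ hA]
  rw [integral_eq_lintegral_of_nonneg_ae (f := fun x => gc n * rexp (-‖x‖ ^ 2 / 2))
    (Eventually.of_forall fun x => mul_nonneg (gc_pos n).le (Real.exp_nonneg _))
    ((continuous_const.mul (((continuous_norm.pow 2).neg.div_const 2).rexp)).aestronglyMeasurable)]
  rfl

lemma gauss_smul {n : ℕ} (M : Set (EuclideanSpace ℝ (Fin n))) (hM : MeasurableSet M)
    {t : ℝ} (ht : 0 < t) :
    (stdGaussian n (t • M)).toReal
      = ∫ y in M, t ^ n * (gc n * rexp (-(t ^ 2 * ‖y‖ ^ 2) / 2)) := by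
  have htne : t ≠ 0 := ht.ne'
  rw [gauss_toReal _ (hM.const_smul₀ t)]
  rw [← integral_indicator (hM.const_smul₀ t)]
  have key : Set.indicator (t • M) (fun x => gc n * rexp (-‖x‖ ^ 2 / 2))
      = fun x => Set.indicator M (fun y => gc n * rexp (-‖t • y‖ ^ 2 / 2)) (t⁻¹ • x) := by
    funext x
    by_cases hx : x ∈ t • M
    · rw [Set.indicator_of_mem hx,
        Set.indicator_of_mem ((Set.mem_smul_set_iff_inv_smul_mem₀ htne _ _).1 hx),
        smul_inv_smul₀ htne]
    · rw [Set.indicator_of_notMem hx, Set.indicator_of_notMem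
        (fun h => hx ((Set.mem_smul_set_iff_inv_smul_mem₀ htne _ _).2 h))]
  rw [key]
  rw [Measure.integral_comp_smul volume (fun x => Set.indicator M
      (fun y => gc n * rexp (-‖t • y‖ ^ 2 / 2)) x) t⁻¹]
  rw [finrank_euclideanSpace_fin, smul_eq_mul, inv_pow, inv_inv, abs_of_nonneg (by positivity),
    integral_indicator hM]
  rw [← integral_const_mul]
  refine setIntegral_congr_fun hM fun y _ => ?_
  rw [norm_smul, Real.norm_eq_abs, mul_pow, sq_abs]

lemma deriv_main {n : ℕ} (M : Set (EuclideanSpace ℝ (Fin n))) (hM : MeasurableSet M) :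
    HasDerivAt (fun t : ℝ => ∫ y in M, t ^ n * (gc n * rexp (-(t ^ 2 * ‖y‖ ^ 2) / 2)))
      (∫ y in M, ((n : ℝ) - ‖y‖ ^ 2) * (gc n * rexp (-‖y‖ ^ 2 / 2))) 1 := by
  set F : ℝ → EuclideanSpace ℝ (Fin n) → ℝ :=
    fun t y => t ^ n * (gc n * rexp (-(t ^ 2 * ‖y‖ ^ 2) / 2)) with hF
  set F' : ℝ → EuclideanSpace ℝ (Fin n) → ℝ :=
    fun t y => ((n : ℝ) * t ^ (n - 1) - ‖y‖ ^ 2 * t ^ (n + 1))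
      * (gc n * rexp (-(t ^ 2 * ‖y‖ ^ 2) / 2)) with hF'
  have contF : ∀ t : ℝ, Continuous (F t) := fun t =>
    continuous_const.mul (continuous_const.mul
      (((continuous_const.mul (continuous_norm.pow 2)).neg.div_const 2).rexp))
  have contF' : ∀ t : ℝ, Continuous (F' t) := fun t =>
    (((continuous_const).sub ((continuous_norm.pow 2).mul continuous_const)).mul
      (continuous_const.mul
        (((continuous_const.mul (continuous_norm.pow 2)).neg.div_const 2).rexp)))
  have key := hasDerivAt_integral_of_dominated_loc_of_deriv_le (F := F) (F' := F')
    (μ := volume.restrict M) (x₀ := (1 : ℝ))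
    (bound := fun y => ((n : ℝ) * 2 ^ (n + 1) + 2 ^ (n + 1) * ‖y‖ ^ 2)
      * (gc n * rexp (-(1/8) * ‖y‖ ^ 2)))
    (s := Metric.ball 1 (1/2)) (Metric.ball_mem_nhds _ (by norm_num))
    (Eventually.of_forall fun t => (contF t).aestronglyMeasurable.restrict)
    ?_ ((contF' 1).aestronglyMeasurable.restrict) ?_ ?_ ?_
  · obtain ⟨-, hkey⟩ := key
    refine hkey.congr_deriv (Eq.symm ?_)
    refine setIntegral_congr_fun hM fun y _ => ?_
    simp only [hF']
    norm_num
  · -- Integrable (F 1)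
    have h := ((int_gauss n (show (0:ℝ) < 1/2 by norm_num)).const_mul (gc n)).restrict (s := M)
    refine h.congr (Eventually.of_forall fun y => ?_)
    simp only [hF]
    norm_num
    left
    congr 1
    ring
  · -- bound
    refine Eventually.of_forall fun y t ht => ?_
    have hball : |t - 1| < 1/2 := by simpa [Real.dist_eq] using ht
    have ht1 : 1/2 < t := by cases abs_sub_lt_iff.1 hball; linarith
    have ht2 : t < 3/2 := by cases abs_sub_lt_iff.1 hball; linarith
    have ht0 : 0 < t := by linarith
    have hs0 : (0:ℝ) ≤ ‖y‖ ^ 2 := by positivity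
    simp only [hF', Real.norm_eq_abs]
    rw [abs_mul, abs_of_pos (mul_pos (gc_pos n) (Real.exp_pos _))]
    have h1 : |(n : ℝ) * t ^ (n - 1) - ‖y‖ ^ 2 * t ^ (n + 1)|
        ≤ (n : ℝ) * 2 ^ (n + 1) + 2 ^ (n + 1) * ‖y‖ ^ 2 := by
      have tpow1 : t ^ (n - 1) ≤ 2 ^ (n + 1) := by
        calc t ^ (n - 1) ≤ 2 ^ (n - 1) := pow_le_pow_left₀ ht0.le (by linarith) _
          _ ≤ 2 ^ (n + 1) := pow_le_pow_right₀ one_le_two (by omega)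
      have tpow2 : t ^ (n + 1) ≤ 2 ^ (n + 1) := pow_le_pow_left₀ ht0.le (by linarith) _
      have tp1 : (0:ℝ) ≤ t ^ (n - 1) := by positivity
      have tp2 : (0:ℝ) ≤ t ^ (n + 1) := by positivity
      calc |(n : ℝ) * t ^ (n - 1) - ‖y‖ ^ 2 * t ^ (n + 1)|
          ≤ |(n : ℝ) * t ^ (n - 1)| + |‖y‖ ^ 2 * t ^ (n + 1)| := abs_sub _ _
        _ = (n : ℝ) * t ^ (n - 1) + ‖y‖ ^ 2 * t ^ (n + 1) := by
            rw [abs_of_nonneg (by positivity), abs_of_nonneg (by positivity)]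
        _ ≤ (n : ℝ) * 2 ^ (n + 1) + 2 ^ (n + 1) * ‖y‖ ^ 2 := by
            rw [mul_comm ((2:ℝ) ^ (n+1)) (‖y‖^2)]
            exact add_le_add (mul_le_mul_of_nonneg_left tpow1 (Nat.cast_nonneg n))
              (mul_le_mul_of_nonneg_left tpow2 hs0)
    have h2 : gc n * rexp (-(t ^ 2 * ‖y‖ ^ 2) / 2) ≤ gc n * rexp (-(1/8) * ‖y‖ ^ 2) := by
      have hq : (1:ℝ)/4 ≤ t ^ 2 := by nlinarith
      have hq2 : (1/4 : ℝ) * ‖y‖ ^ 2 ≤ t ^ 2 * ‖y‖ ^ 2 := mul_le_mul_of_nonneg_right hq hs0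
      have : -(t ^ 2 * ‖y‖ ^ 2) / 2 ≤ -(1/8) * ‖y‖ ^ 2 := by linarith
      exact mul_le_mul_of_nonneg_left (Real.exp_le_exp.2 this) (gc_pos n).le
    exact mul_le_mul h1 h2 (mul_pos (gc_pos n) (Real.exp_pos _)).le (by positivity)
  · -- bound integrable
    have h1 := ((int_gauss n (show (0:ℝ) < 1/8 by norm_num)).const_mul
      ((n : ℝ) * 2 ^ (n + 1) * gc n)).restrict (s := M)
    have h2 := ((int_sq_gauss n (show (0:ℝ) < 1/8 by norm_num)).const_mul
      ((2:ℝ) ^ (n + 1) * gc n)).restrict (s := M)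
    refine (h1.add h2).congr (Eventually.of_forall fun y => ?_)
    simp only [Pi.add_apply]
    ring
  · -- differentiability
    refine Eventually.of_forall fun y t _ => ?_
    have hq : HasDerivAt (fun u : ℝ => -(u ^ 2 * ‖y‖ ^ 2) / 2)
        (-(‖y‖ ^ 2) / 2 * (2 * t ^ 1)) t := by
      have hfun : (fun u : ℝ => -(u ^ 2 * ‖y‖ ^ 2) / 2)
          = fun u : ℝ => (-(‖y‖ ^ 2) / 2) * u ^ 2 := by funext u; ring
      rw [hfun]
      exact (hasDerivAt_pow 2 t).const_mul _
    have hexp := (hq.exp).const_mul (gc n)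
    have hmul := (hasDerivAt_pow n t).mul hexp
    refine hmul.congr_deriv ?_
    simp only [hF']
    ring

lemma smul_ae_eq {n : ℕ} {A B : Set (EuclideanSpace ℝ (Fin n))} (h : A =ᵐ[volume] B)
    {t : ℝ} (ht : t ≠ 0) : (t • A : Set _) =ᵐ[volume] t • B := by
  rw [ae_eq_set] at h ⊢
  obtain ⟨h1, h2⟩ := h
  have sub : ∀ (S T : Set (EuclideanSpace ℝ (Fin n))), t • S \ t • T ⊆ t • (S \ T) := by
    rintro S T x ⟨hxS, hxT⟩
    obtain ⟨a, ha, rfl⟩ := hxS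
    exact ⟨a, ⟨ha, fun hb => hxT (Set.smul_mem_smul_set hb)⟩, rfl⟩
  have null : ∀ (S T : Set (EuclideanSpace ℝ (Fin n))), volume (S \ T) = 0 →
      volume (t • S \ t • T) = 0 := by
    intro S T h0
    refine measure_mono_null (sub S T) ?_
    rw [Measure.addHaar_smul, h0, mul_zero]
  exact ⟨null A B h1, null B A h2⟩

end TinfAux

open Filter Set

/-- Dilation formulation of total convex influence:
`TInf[K] = lim_{δ→0⁺} (γₙ((1+δ)K) − γₙ(K))/δ`. -/
theorem tinf_dilation (n : ℕ) (K : Set (EuclideanSpace ℝ (Fin n))) (hK : Convex ℝ K)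
    (h0 : (0 : EuclideanSpace ℝ (Fin n)) ∈ K) :
    Filter.Tendsto
      (fun δ : ℝ => ((stdGaussian n ((1 + δ) • K)).toReal - (stdGaussian n K).toReal) / δ)
      (nhdsWithin 0 (Set.Ioi 0))
      (nhds (∫ x, Set.indicator K (fun x => (n : ℝ) - ‖x‖ ^ 2) x ∂stdGaussian n)) := by
  obtain ⟨M, hMsub, hMmeas, hMae⟩ :=
    (hK.nullMeasurableSet (μ := volume)).exists_measurable_subset_ae_eq
  have hac : stdGaussian n ≪ volume := withDensity_absolutelyContinuous _ _
  have hstd : ∀ t : ℝ, t ≠ 0 → stdGaussian n (t • K) = stdGaussian n (t • M) := by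
    intro t ht
    exact measure_congr ((smul_ae_eq hMae.symm ht).filter_mono hac.ae_le)
  set D : ℝ := ∫ y in M, ((n : ℝ) - ‖y‖ ^ 2) * (gc n * rexp (-‖y‖ ^ 2 / 2)) with hD
  have hRHS : (∫ x, Set.indicator K (fun x => (n : ℝ) - ‖x‖ ^ 2) x ∂stdGaussian n) = D := by
    rw [integral_congr_ae
      (indicator_ae_eq_of_ae_eq_set ((hMae.symm).filter_mono hac.ae_le))]
    rw [integral_indicator hMmeas]
    have hrepr : stdGaussian n
        = volume.withDensity (fun x => ((gc n * rexp (-‖x‖ ^ 2 / 2)).toNNReal : ENNReal)) := rfl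
    rw [hrepr]
    have hfm : Measurable fun x : EuclideanSpace ℝ (Fin n) =>
        (gc n * rexp (-‖x‖ ^ 2 / 2)).toNNReal :=
      (continuous_real_toNNReal.comp (continuous_const.mul
        (((continuous_norm.pow 2).neg.div_const 2).rexp))).measurable
    rw [setIntegral_withDensity_eq_setIntegral_smul hfm _ hMmeas]
    refine setIntegral_congr_fun hMmeas fun y _ => ?_
    have hnn : 0 ≤ gc n * rexp (-‖y‖ ^ 2 / 2) :=
      mul_nonneg (gc_pos n).le (Real.exp_nonneg _)
    rw [NNReal.smul_def, Real.coe_toNNReal _ hnn, smul_eq_mul]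
    ring
  rw [hRHS]
  have hd := deriv_main M hMmeas
  rw [hasDerivAt_iff_tendsto_slope] at hd
  have hmap : Tendsto (fun δ : ℝ => 1 + δ) (nhdsWithin 0 (Set.Ioi 0))
      (nhdsWithin 1 {(1 : ℝ)}ᶜ) := by
    rw [tendsto_nhdsWithin_iff]
    constructor
    · have h1 : Tendsto (fun δ : ℝ => 1 + δ) (nhds 0) (nhds 1) := by
        simpa using (continuous_add_left (1:ℝ)).tendsto (0 : ℝ)
      exact h1.mono_left nhdsWithin_le_nhds
    · filter_upwards [self_mem_nhdsWithin] with δ hδ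
      have : (0:ℝ) < δ := hδ
      simp only [Set.mem_compl_iff, Set.mem_singleton_iff]
      intro h; linarith
  have hcomp := hd.comp hmap
  refine Filter.Tendsto.congr' ?_ hcomp
  filter_upwards [self_mem_nhdsWithin] with δ hδ
  have hδ0 : (0:ℝ) < δ := hδ
  have ht : (0:ℝ) < 1 + δ := by linarith
  have e1 : (stdGaussian n ((1 + δ) • K)).toReal
      = ∫ y in M, (1+δ) ^ n * (gc n * rexp (-((1+δ) ^ 2 * ‖y‖ ^ 2) / 2)) := by
    rw [hstd _ ht.ne', gauss_smul M hMmeas ht]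
  have e2 : (stdGaussian n K).toReal
      = ∫ y in M, (1:ℝ) ^ n * (gc n * rexp (-((1:ℝ) ^ 2 * ‖y‖ ^ 2) / 2)) := by
    rw [← one_smul ℝ K, hstd 1 one_ne_zero, gauss_smul M hMmeas one_pos]
  simp only [Function.comp_apply, slope_def_field]
  rw [e1, e2, add_sub_cancel_left]
end

section
/- Let K ⊆ ℝⁿ be a convex set containing the origin. Then the total convex influence TInf[K] = E_{x∼N(0,Iₙ)}[K(x)·(n − ‖x‖²)] is non-negative. -/
open MeasureTheory ProbabilityTheory Real

section Aux
open Set Filter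


lemma aux_int_pow (k : ℕ) :
    IntegrableOn (fun r : ℝ => r ^ k * Real.exp (-r ^ 2 / 2)) (Set.Ioi 0) := by
  have h := integrableOn_rpow_mul_exp_neg_mul_sq (b := (1:ℝ)/2) (by norm_num)
    (s := (k : ℝ)) (by exact lt_of_lt_of_le (by norm_num) (Nat.cast_nonneg k))
  refine IntegrableOn.congr_fun h (fun x hx => ?_) measurableSet_Ioi
  rw [Real.rpow_natCast]
  ring_nf

lemma aux_hasDeriv (m : ℕ) (r : ℝ) :
    HasDerivAt (fun t : ℝ => t ^ (m + 1) * Real.exp (-t ^ 2 / 2))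
      (r ^ m * (((m : ℝ) + 1) - r ^ 2) * Real.exp (-r ^ 2 / 2)) r := by
  have h1 : HasDerivAt (fun t : ℝ => -t ^ 2 / 2) (-r) r := by
    have := ((hasDerivAt_pow 2 r).neg.div_const 2)
    exact this.congr_deriv (by norm_num; ring)
  have h2 : HasDerivAt (fun t : ℝ => Real.exp (-t ^ 2 / 2))
      (Real.exp (-r ^ 2 / 2) * (-r)) r := h1.exp
  have h3 := (hasDerivAt_pow (m + 1) r).mul h2
  exact h3.congr_deriv (by simp only [Nat.add_sub_cancel, Nat.cast_add, Nat.cast_one]; ring)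

lemma aux_tendsto (m : ℕ) :
    Tendsto (fun t : ℝ => t ^ (m + 1) * Real.exp (-t ^ 2 / 2)) atTop (nhds 0) := by
  apply squeeze_zero' (g := fun t : ℝ => Real.exp (1 / 2) * (t ^ (m + 1) * Real.exp (-t)))
  · filter_upwards [eventually_ge_atTop (0 : ℝ)] with t ht
    positivity
  · filter_upwards [eventually_ge_atTop (0 : ℝ)] with t ht
    have h1 : -t ^ 2 / 2 ≤ 1 / 2 + -t := by nlinarith [sq_nonneg (t - 1)]
    have := Real.exp_le_exp.2 h1
    rw [Real.exp_add] at this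
    calc t ^ (m + 1) * Real.exp (-t ^ 2 / 2)
        ≤ t ^ (m + 1) * (Real.exp (1 / 2) * Real.exp (-t)) :=
          mul_le_mul_of_nonneg_left this (by positivity)
      _ = Real.exp (1 / 2) * (t ^ (m + 1) * Real.exp (-t)) := by ring
  · simpa using (tendsto_pow_mul_exp_neg_atTop_nhds_zero (m + 1)).const_mul (Real.exp (1 / 2))

lemma key1d (m : ℕ) (I : Set ℝ) (hI : I ⊆ Set.Ioi 0)
    (hdc : ∀ ⦃r s : ℝ⦄, r ∈ I → 0 < s → s ≤ r → s ∈ I) :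
    0 ≤ ∫ r in Set.Ioi (0 : ℝ),
      I.indicator (fun t => t ^ m * (((m : ℝ) + 1) - t ^ 2) * Real.exp (-t ^ 2 / 2)) r := by
  set G' : ℝ → ℝ := fun t => t ^ m * (((m : ℝ) + 1) - t ^ 2) * Real.exp (-t ^ 2 / 2) with hG'
  set G : ℝ → ℝ := fun t => t ^ (m + 1) * Real.exp (-t ^ 2 / 2) with hG
  have hderiv : ∀ r : ℝ, HasDerivAt G (G' r) r := aux_hasDeriv m
  have hcont : Continuous G' := by fun_prop
  have hint : IntegrableOn G' (Set.Ioi 0) := by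
    have h := (((aux_int_pow m).const_mul ((m : ℝ) + 1)).sub (aux_int_pow (m + 2)))
    refine IntegrableOn.congr_fun h (fun x hx => ?_) measurableSet_Ioi
    simp only [Pi.sub_apply, hG']
    ring
  rcases Set.eq_empty_or_nonempty I with rfl | hne
  · simp
  by_cases hb : BddAbove I
  · obtain ⟨a, ha⟩ := hne
    set R := sSup I with hR
    have hRpos : 0 < R := lt_of_lt_of_le (hI ha) (le_csSup hb ha)
    have hae : I.indicator G' =ᵐ[volume.restrict (Set.Ioi 0)] (Set.Ioo 0 R).indicator G' := by
      have hptw : ∀ r : ℝ, r ≠ R → I.indicator G' r = (Set.Ioo 0 R).indicator G' r := by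
        intro r hr
        by_cases hrI : r ∈ I
        · rw [Set.indicator_of_mem hrI, Set.indicator_of_mem]
          exact ⟨hI hrI, lt_of_le_of_ne (le_csSup hb hrI) hr⟩
        · rw [Set.indicator_of_notMem hrI, Set.indicator_of_notMem]
          intro hrIoo
          obtain ⟨s, hsI, hrs⟩ := exists_lt_of_lt_csSup ⟨a, ha⟩ hrIoo.2
          exact hrI (hdc hsI hrIoo.1 hrs.le)
      refine ae_restrict_of_ae ?_
      have hmem : {R}ᶜ ∈ ae (volume : Measure ℝ) :=
        compl_mem_ae_iff.mpr (measure_singleton R)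
      filter_upwards [hmem] with r hr using hptw r hr
    rw [integral_congr_ae hae, integral_indicator measurableSet_Ioo,
      Measure.restrict_restrict measurableSet_Ioo,
      Set.inter_eq_self_of_subset_left Set.Ioo_subset_Ioi_self,
      ← integral_Ioc_eq_integral_Ioo, ← intervalIntegral.integral_of_le hRpos.le,
      intervalIntegral.integral_eq_sub_of_hasDerivAt (fun x _ => hderiv x)
        ((hcont).intervalIntegrable 0 R)]
    have hG0 : G 0 = 0 := by simp [hG]
    rw [hG0, sub_zero]
    simp only [hG]
    positivity
  · have hIoi : ∀ r : ℝ, 0 < r → r ∈ I := by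
      intro r hr
      obtain ⟨s, hsI, hrs⟩ := not_bddAbove_iff.1 hb r
      exact hdc hsI hr hrs.le
    rw [setIntegral_congr_fun measurableSet_Ioi
      (fun r hr => Set.indicator_of_mem (hIoi r hr) G')]
    rw [integral_Ioi_of_hasDerivAt_of_tendsto' (fun x _ => hderiv x) hint (aux_tendsto m)]
    simp [hG]

set_option synthInstance.maxHeartbeats 1000000 in
set_option maxHeartbeats 2000000 in
theorem tinf_nonneg_closed (n : ℕ) (hn : n ≠ 0) (K : Set (EuclideanSpace ℝ (Fin n)))
    (hK : Convex ℝ K) (hcl : IsClosed K) (h0 : (0 : EuclideanSpace ℝ (Fin n)) ∈ K) :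
    0 ≤ ∫ x, Set.indicator K (fun x => (n : ℝ) - ‖x‖ ^ 2) x ∂stdGaussian n := by
  obtain ⟨m, rfl⟩ : ∃ m, n = m + 1 := ⟨n - 1, (Nat.succ_pred_eq_of_pos (Nat.pos_of_ne_zero hn)).symm⟩
  clear hn
  set c : ℝ := (2 * π) ^ (-((m + 1 : ℕ) : ℝ) / 2) with hc
  have hcpos : 0 < c := Real.rpow_pos_of_pos (by positivity) _
  set φ : EuclideanSpace ℝ (Fin (m + 1)) → ℝ := fun x => ((m + 1 : ℕ) : ℝ) - ‖x‖ ^ 2 with hφ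
  set d : EuclideanSpace ℝ (Fin (m + 1)) → NNReal := fun x => Real.toNNReal (c * Real.exp (-‖x‖ ^ 2 / 2)) with hd
  have hdm : Measurable d := by
    apply Measurable.real_toNNReal
    fun_prop
  have hstd : stdGaussian (m + 1) = volume.withDensity (fun x => ((d x : NNReal) : ENNReal)) := rfl
  rw [hstd, integral_withDensity_eq_integral_smul hdm]
  have hsmul : ∀ x : EuclideanSpace ℝ (Fin (m + 1)), d x • Set.indicator K φ x
      = (c * Real.exp (-‖x‖ ^ 2 / 2)) * Set.indicator K φ x := by
    intro x
    rw [NNReal.smul_def, Real.coe_toNNReal _ (by positivity), smul_eq_mul]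
  simp only [hsmul]
  -- polar coordinates
  have hKm : MeasurableSet K := hcl.measurableSet
  have hφc : Continuous φ := by fun_prop
  set g : Metric.sphere (0 : (EuclideanSpace ℝ (Fin (m + 1)))) 1 × Set.Ioi (0 : ℝ) → ℝ :=
    fun p => (c * Real.exp (-((p.2 : ℝ)) ^ 2 / 2))
      * Set.indicator K φ ((p.2 : ℝ) • (p.1 : (EuclideanSpace ℝ (Fin (m + 1))))) with hg
  have hgm : Measurable g := by
    have h1 : Measurable fun p : Metric.sphere (0 : (EuclideanSpace ℝ (Fin (m + 1)))) 1 × Set.Ioi (0 : ℝ) =>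
        ((p.2 : ℝ) • (p.1 : (EuclideanSpace ℝ (Fin (m + 1))))) :=
      ((continuous_subtype_val.comp continuous_snd).smul
        (continuous_subtype_val.comp continuous_fst)).measurable
    exact ((measurable_const.mul (by fun_prop)).mul
      ((hφc.measurable.indicator hKm).comp h1))
  have hcomp : ∀ x : ({(0 : (EuclideanSpace ℝ (Fin (m + 1))))}ᶜ : Set (EuclideanSpace ℝ (Fin (m + 1)))),
      (fun y : EuclideanSpace ℝ (Fin (m + 1)) => (c * Real.exp (-‖y‖ ^ 2 / 2)) * Set.indicator K φ y) (x : (EuclideanSpace ℝ (Fin (m + 1))))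
        = g (homeomorphUnitSphereProd (EuclideanSpace ℝ (Fin (m + 1))) x) := by
    intro x
    have hx : (x : (EuclideanSpace ℝ (Fin (m + 1)))) ≠ 0 := x.2
    simp only [hg, homeomorphUnitSphereProd_apply_fst_coe, homeomorphUnitSphereProd_apply_snd_coe]
    rw [smul_inv_smul₀ (norm_ne_zero_iff.2 hx)]
  have hfrk : Module.finrank ℝ (EuclideanSpace ℝ (Fin (m + 1))) - 1 = m := by
    rw [finrank_euclideanSpace_fin]
    simp
  -- the integrable bound
  set B : ℝ → ℝ := fun t => (c * Real.exp (-t ^ 2 / 2)) * (((m + 1 : ℕ) : ℝ) + t ^ 2) with hB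
  have hBint : Integrable (fun r : Set.Ioi (0 : ℝ) => B (r : ℝ)) (Measure.volumeIoiPow m) := by
    have h1 : IntegrableOn (fun t : ℝ => B t * t ^ m) (Set.Ioi 0) := by
      have h := (((aux_int_pow m).const_mul (c * ((m + 1 : ℕ) : ℝ))).add
        ((aux_int_pow (m + 2)).const_mul c))
      refine IntegrableOn.congr_fun h (fun x hx => ?_) measurableSet_Ioi
      simp only [Pi.add_apply, hB]
      ring
    have h2 : Integrable ((fun t : ℝ => B t * t ^ m) ∘ Subtype.val)
        (Measure.comap (Subtype.val : Set.Ioi (0:ℝ) → ℝ) volume) := by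
      rw [← (MeasurableEmbedding.subtype_coe measurableSet_Ioi).integrable_map_iff,
        map_comap_subtype_coe measurableSet_Ioi]
      exact h1
    rw [Measure.volumeIoiPow, integrable_withDensity_iff
      ((measurable_subtype_coe.pow_const m).ennreal_ofReal)
      (Filter.Eventually.of_forall fun r => ENNReal.ofReal_lt_top)]
    refine h2.congr (Filter.Eventually.of_forall fun r => ?_)
    simp only [Function.comp_apply]
    rw [ENNReal.toReal_ofReal (pow_nonneg (le_of_lt r.2) m)]
  have hgint : Integrable g ((volume : Measure (EuclideanSpace ℝ (Fin (m + 1)))).toSphere.prod (Measure.volumeIoiPow m)) := by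
    have hB2 : Integrable (fun p : Metric.sphere (0 : (EuclideanSpace ℝ (Fin (m + 1)))) 1 × Set.Ioi (0 : ℝ) => B (p.2 : ℝ))
        ((volume : Measure (EuclideanSpace ℝ (Fin (m + 1)))).toSphere.prod (Measure.volumeIoiPow m)) := by
      simpa using (integrable_const (1 : ℝ)).mul_prod hBint
    refine hB2.mono' hgm.aestronglyMeasurable (Filter.Eventually.of_forall fun p => ?_)
    have hθ : ‖(p.1 : (EuclideanSpace ℝ (Fin (m + 1))))‖ = 1 := mem_sphere_zero_iff_norm.1 p.1.2
    have hnorm : ‖(p.2 : ℝ) • (p.1 : (EuclideanSpace ℝ (Fin (m + 1))))‖ ^ 2 = (p.2 : ℝ) ^ 2 := by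
      rw [norm_smul, hθ, mul_one, Real.norm_eq_abs, sq_abs]
    have hind : ∀ y : EuclideanSpace ℝ (Fin (m + 1)), |Set.indicator K φ y| ≤ ((m + 1 : ℕ) : ℝ) + ‖y‖ ^ 2 := by
      intro y
      by_cases hy : y ∈ K
      · rw [Set.indicator_of_mem hy]
        have hφy : φ y = ((m + 1 : ℕ) : ℝ) - ‖y‖ ^ 2 := rfl
        rw [hφy, abs_le]
        have hmn : (0:ℝ) ≤ ((m + 1 : ℕ) : ℝ) := Nat.cast_nonneg _
        constructor
        · nlinarith [sq_nonneg ‖y‖]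
        · nlinarith [sq_nonneg ‖y‖]
      · rw [Set.indicator_of_notMem hy, abs_zero]
        positivity
    rw [hg, Real.norm_eq_abs, abs_mul, abs_of_pos (by positivity : (0:ℝ) < c * Real.exp _)]
    calc (c * Real.exp (-((p.2 : ℝ)) ^ 2 / 2)) * |Set.indicator K φ ((p.2 : ℝ) • (p.1 : (EuclideanSpace ℝ (Fin (m + 1)))))|
        ≤ (c * Real.exp (-((p.2 : ℝ)) ^ 2 / 2))
          * (((m + 1 : ℕ) : ℝ) + ‖(p.2 : ℝ) • (p.1 : (EuclideanSpace ℝ (Fin (m + 1))))‖ ^ 2) :=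
          mul_le_mul_of_nonneg_left (hind _) (by positivity)
      _ = B (p.2 : ℝ) := by rw [hnorm, hB]
  calc (0:ℝ) ≤ ∫ p, g p ∂((volume : Measure (EuclideanSpace ℝ (Fin (m + 1)))).toSphere.prod (Measure.volumeIoiPow m)) := by
        rw [MeasureTheory.integral_prod g hgint]
        refine integral_nonneg fun θ => ?_
        rw [Pi.zero_apply]
        -- inner integral
        simp only [hg, Measure.volumeIoiPow, ENNReal.ofReal]
        rw [integral_withDensity_eq_integral_smul
            ((measurable_subtype_coe.pow_const m).real_toNNReal),
          integral_subtype_comap measurableSet_Ioi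
            (fun t : ℝ => Real.toNNReal (t ^ m)
              • ((c * Real.exp (-t ^ 2 / 2)) * Set.indicator K φ (t • (θ : (EuclideanSpace ℝ (Fin (m + 1)))))))]
        set I : Set ℝ := {t : ℝ | 0 < t ∧ t • (θ : (EuclideanSpace ℝ (Fin (m + 1)))) ∈ K} with hI
        have heq : ∀ t ∈ Set.Ioi (0:ℝ),
            Real.toNNReal (t ^ m)
              • ((c * Real.exp (-t ^ 2 / 2)) * Set.indicator K φ (t • (θ : (EuclideanSpace ℝ (Fin (m + 1))))))
            = c * I.indicator
                (fun u => u ^ m * (((m : ℝ) + 1) - u ^ 2) * Real.exp (-u ^ 2 / 2)) t := by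
          intro t ht
          rw [NNReal.smul_def, Real.coe_toNNReal _ (pow_nonneg (le_of_lt ht) m), smul_eq_mul]
          by_cases htK : t • (θ : (EuclideanSpace ℝ (Fin (m + 1)))) ∈ K
          · rw [Set.indicator_of_mem htK, Set.indicator_of_mem (Set.mem_setOf.2 ⟨ht, htK⟩)]
            have hnt : ‖t • (θ : (EuclideanSpace ℝ (Fin (m + 1))))‖ ^ 2 = t ^ 2 := by
              rw [norm_smul, mem_sphere_zero_iff_norm.1 θ.2, mul_one, Real.norm_eq_abs, sq_abs]
            have hφv : φ (t • (θ : (EuclideanSpace ℝ (Fin (m + 1)))))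
                = ((m + 1 : ℕ) : ℝ) - ‖t • (θ : (EuclideanSpace ℝ (Fin (m + 1))))‖ ^ 2 := rfl
            rw [hφv, hnt]
            push_cast
            ring
          · rw [Set.indicator_of_notMem htK,
              Set.indicator_of_notMem (fun hcon => htK hcon.2)]
            ring
        rw [setIntegral_congr_fun measurableSet_Ioi heq, MeasureTheory.integral_const_mul]
        refine mul_nonneg hcpos.le (key1d m I (fun t ht => ht.1) ?_)
        intro r s hr hs hsr
        refine ⟨hs, ?_⟩
        have hmem := hK.smul_mem_of_zero_mem h0 hr.2
          ⟨div_nonneg hs.le hr.1.le, (div_le_one hr.1).2 hsr⟩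
        rwa [smul_smul, div_mul_cancel₀ _ (ne_of_gt hr.1)] at hmem
    _ = ∫ x : ({(0 : (EuclideanSpace ℝ (Fin (m + 1))))}ᶜ : Set (EuclideanSpace ℝ (Fin (m + 1)))),
          (fun y : EuclideanSpace ℝ (Fin (m + 1)) => (c * Real.exp (-‖y‖ ^ 2 / 2)) * Set.indicator K φ y) (x : (EuclideanSpace ℝ (Fin (m + 1))))
          ∂(Measure.comap Subtype.val volume) := by
        have hmp := Measure.measurePreserving_homeomorphUnitSphereProd
          (volume : Measure (EuclideanSpace ℝ (Fin (m + 1))))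
        rw [hfrk] at hmp
        rw [← hmp.integral_comp (Homeomorph.measurableEmbedding _) g]
        exact (integral_congr_ae (Filter.Eventually.of_forall fun x => hcomp x)).symm
    _ = ∫ x, (c * Real.exp (-‖x‖ ^ 2 / 2)) * Set.indicator K φ x := by
        rw [integral_subtype_comap (measurableSet_singleton _).compl
            (fun y : EuclideanSpace ℝ (Fin (m + 1)) =>
              (c * Real.exp (-‖y‖ ^ 2 / 2)) * Set.indicator K φ y),
          MeasureTheory.restrict_compl_singleton]

end Aux

/-- The total convex influence of a convex set containing the origin is non-negative. -/
theorem tinf_nonneg (n : ℕ) (K : Set (EuclideanSpace ℝ (Fin n))) (hK : Convex ℝ K)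
    (h0 : (0 : EuclideanSpace ℝ (Fin n)) ∈ K) :
    0 ≤ ∫ x, Set.indicator K (fun x => (n : ℝ) - ‖x‖ ^ 2) x ∂stdGaussian n := by
  rcases eq_or_ne n 0 with rfl | hn
  · have h : ∀ x : EuclideanSpace ℝ (Fin 0),
        Set.indicator K (fun x => ((0 : ℕ) : ℝ) - ‖x‖ ^ 2) x = 0 := by
      intro x
      have hx0 : x = 0 := Subsingleton.elim x 0
      by_cases hxK : x ∈ K <;> simp [Set.indicator_apply, hxK, hx0]
    rw [integral_congr_ae (Filter.Eventually.of_forall h), integral_zero]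
  · set C := closure K with hC
    have hCc : Convex ℝ C := hK.closure
    have hCcl : IsClosed C := isClosed_closure
    have h0C : (0 : EuclideanSpace ℝ (Fin n)) ∈ C := subset_closure h0
    have hfr : (volume : Measure (EuclideanSpace ℝ (Fin n))) (frontier K) = 0 :=
      hK.addHaar_frontier volume
    have hsub : {x : EuclideanSpace ℝ (Fin n) |
        ¬ Set.indicator K (fun x => (n : ℝ) - ‖x‖ ^ 2) x
          = Set.indicator C (fun x => (n : ℝ) - ‖x‖ ^ 2) x} ⊆ frontier K := by
      intro x hx
      by_cases hxK : x ∈ K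
      · exact absurd (by rw [Set.indicator_of_mem hxK,
          Set.indicator_of_mem (subset_closure hxK)]) hx
      · by_cases hxC : x ∈ C
        · exact ⟨hxC, fun hint => hxK (interior_subset hint)⟩
        · exact absurd (by rw [Set.indicator_of_notMem hxK,
            Set.indicator_of_notMem hxC]) hx
    have hae : (fun x => Set.indicator K (fun x => (n : ℝ) - ‖x‖ ^ 2) x)
        =ᵐ[stdGaussian n] (fun x => Set.indicator C (fun x => (n : ℝ) - ‖x‖ ^ 2) x) := by
      have h1 : stdGaussian n ≪ (volume : Measure (EuclideanSpace ℝ (Fin n))) :=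
        withDensity_absolutelyContinuous _ _
      exact ae_iff.mpr (h1 (measure_mono_null hsub hfr))
    rw [integral_congr_ae hae]
    exact tinf_nonneg_closed n hn C hCc hCcl h0C
end
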